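/- arXiv:2504.04491 — 5 statements merged into one kernel-verified Lean document; each statement's English description precedes it below -/
import Mathlib

section
/- Let G₁, G₂, G₃ and K be polynomials in the real variables x₁, x₂, x₃ such that 2x₁²G₁ + 2x₂²G₂ + 2x₃²G₃ = (x₁² + x₂² + x₃² − 1)·K as polynomials, and suppose K is not the zero polynomial. Then m := max{deg(x₁G₁), deg(x₂G₂), deg(x₃G₃)} satisfies m ≥ 3. (In particular, a three-dimensional polynomial Kolmogorov system ẋᵢ = xᵢGᵢ(x₁,x₂,x₃), i = 1,2,3, possessing the unit sphere S² as an isolated invariant surface must have degree at least 3.) -/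
open MvPolynomial Finsupp

private lemma two_le_degree_of_mem_support {q : MvPolynomial (Fin 3) ℝ} {i : Fin 3}
    {d : Fin 3 →₀ ℕ} (hd : d ∈ (X i ^ 2 * q).support) : 2 ≤ d.degree := by
  classical
  obtain ⟨a, ha, b, hb, rfl⟩ := Finset.mem_add.mp (MvPolynomial.support_mul _ _ hd)
  rw [MvPolynomial.support_X_pow, Finset.mem_singleton] at ha
  subst ha
  have e1 : (Finsupp.single i 2 : Fin 3 →₀ ℕ).degree = 2 := by
    rw [Finsupp.degree_apply, Finsupp.support_single_ne_zero _ (by norm_num)]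
    simp
  have e2 : ((Finsupp.single i 2 : Fin 3 →₀ ℕ) + b).degree
      = (Finsupp.single i 2 : Fin 3 →₀ ℕ).degree + b.degree := by
    simp only [Finsupp.degree_eq_weight_one, map_add]
  omega

private lemma comp_term_zero {q : MvPolynomial (Fin 3) ℝ} {i : Fin 3} {n : ℕ} (hn : n ≤ 1) :
    homogeneousComponent n (X i ^ 2 * q) = 0 := by
  apply homogeneousComponent_eq_zero'
  intro d hd
  have := two_le_degree_of_mem_support hd
  omega

private lemma term_deg {G : MvPolynomial (Fin 3) ℝ} {i : Fin 3} (h : (X i * G).totalDegree ≤ 2) :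
    (2 * X i ^ 2 * G).totalDegree ≤ 3 := by
  have e : (2 * X i ^ 2 * G) = 2 * (X i * (X i * G)) := by ring
  rw [e]
  calc (2 * (X i * (X i * G)) : MvPolynomial (Fin 3) ℝ).totalDegree
      ≤ (2 : MvPolynomial (Fin 3) ℝ).totalDegree + (X i * (X i * G)).totalDegree :=
        totalDegree_mul _ _
    _ ≤ 0 + ((X i : MvPolynomial (Fin 3) ℝ).totalDegree + (X i * G).totalDegree) := by
        gcongr
        · rw [show (2 : MvPolynomial (Fin 3) ℝ) = C 2 from (map_ofNat C 2).symm, totalDegree_C]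
        · exact totalDegree_mul _ _
    _ ≤ 0 + (1 + 2) := by rw [totalDegree_X]; omega
    _ = 3 := by norm_num

/-- If `2x₁²G₁ + 2x₂²G₂ + 2x₃²G₃ = (x₁²+x₂²+x₃²−1)·K` with `K ≠ 0`, then
`m = max deg(xᵢGᵢ) ≥ 3`; i.e. a Kolmogorov system with the unit sphere as an isolated
invariant surface has degree at least 3. -/
theorem degree_ge_three_of_isolated_invariant_sphere
    (G₁ G₂ G₃ K : MvPolynomial (Fin 3) ℝ)
    (heq : 2 * X 0 ^ 2 * G₁ + 2 * X 1 ^ 2 * G₂ + 2 * X 2 ^ 2 * G₃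
        = (X 0 ^ 2 + X 1 ^ 2 + X 2 ^ 2 - 1) * K)
    (hK : K ≠ 0) :
    3 ≤ max (max (X 0 * G₁ : MvPolynomial (Fin 3) ℝ).totalDegree
          (X 1 * G₂ : MvPolynomial (Fin 3) ℝ).totalDegree)
        (X 2 * G₃ : MvPolynomial (Fin 3) ℝ).totalDegree := by
  by_contra hlt
  push_neg at hlt
  rw [max_lt_iff, max_lt_iff] at hlt
  obtain ⟨⟨h1, h2⟩, h3⟩ := hlt
  replace h1 : (X 0 * G₁ : MvPolynomial (Fin 3) ℝ).totalDegree ≤ 2 := by omega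
  replace h2 : (X 1 * G₂ : MvPolynomial (Fin 3) ℝ).totalDegree ≤ 2 := by omega
  replace h3 : (X 2 * G₃ : MvPolynomial (Fin 3) ℝ).totalDegree ≤ 2 := by omega
  set S : MvPolynomial (Fin 3) ℝ := X 0 ^ 2 + X 1 ^ 2 + X 2 ^ 2 with hSdef
  set L : MvPolynomial (Fin 3) ℝ :=
    2 * X 0 ^ 2 * G₁ + 2 * X 1 ^ 2 * G₂ + 2 * X 2 ^ 2 * G₃ with hLdef
  have hSK : S * K = L + K := by rw [heq]; ring
  have hS0 : S ≠ 0 := by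
    intro h0
    have := congrArg (eval (fun _ : Fin 3 => (1 : ℝ))) h0
    simp [hSdef] at this
    norm_num at this
  have hSdeg : S.totalDegree ≤ 2 := by
    rw [hSdef]
    refine (totalDegree_add _ _).trans
      (max_le ((totalDegree_add _ _).trans (max_le ?_ ?_)) ?_) <;>
      simp [totalDegree_X_pow]
  have hLdeg : L.totalDegree ≤ 3 := by
    rw [hLdef]
    refine (totalDegree_add _ _).trans ?_
    refine max_le ((totalDegree_add _ _).trans (max_le ?_ ?_)) ?_
    exacts [term_deg h1, term_deg h2, term_deg h3]
  -- Step 1 : deg K ≤ 1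
  have hK1 : K.totalDegree ≤ 1 := by
    by_contra hk
    push_neg at hk
    set k := K.totalDegree with hkdef
    have hk2 : 2 ≤ k := hk
    set H : MvPolynomial (Fin 3) ℝ := homogeneousComponent k K with hHdef
    have hH0 : H ≠ 0 := by
      obtain ⟨d, hd, hdk⟩ := Finset.exists_mem_eq_sup K.support
        (support_nonempty.mpr hK) (fun s => s.sum fun _ e => e)
      intro h0
      have hc := congrArg (coeff d) h0
      rw [hHdef, coeff_homogeneousComponent] at hc
      have hdeg : d.degree = k := by rw [hkdef, totalDegree, hdk]; rfl
      rw [if_pos hdeg] at hc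
      exact (MvPolynomial.mem_support_iff.mp hd) (by simpa using hc)
    have hrest : (K - H).totalDegree < k := by
      rw [totalDegree]
      rw [Finset.sup_lt_iff (by simp only [bot_eq_zero']; omega)]
      intro d hd
      have hcd := MvPolynomial.mem_support_iff.mp hd
      have hdk : d.degree ≠ k := by
        intro h
        apply hcd
        rw [coeff_sub, hHdef, coeff_homogeneousComponent, if_pos h, sub_self]
      have hdK : d ∈ K.support := by
        rw [MvPolynomial.mem_support_iff]
        intro h0
        apply hcd
        rw [coeff_sub, h0, hHdef, coeff_homogeneousComponent]
        split <;> simp [h0]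
      have := le_totalDegree hdK
      have hde : (d.sum fun _ e => e) = d.degree := rfl
      omega
    have hcomp2 : homogeneousComponent (k + 2) (S * K) = S * H := by
      have e : S * K = S * H + S * (K - H) := by ring
      rw [e, map_add]
      have h2' : homogeneousComponent (k + 2) (S * (K - H)) = 0 := by
        apply homogeneousComponent_eq_zero
        calc (S * (K - H)).totalDegree ≤ S.totalDegree + (K - H).totalDegree :=
          totalDegree_mul _ _
        _ < k + 2 := by omega
      have hSH : (S * H).IsHomogeneous (2 + k) := by
        refine IsHomogeneous.mul ?_ (homogeneousComponent_isHomogeneous k K)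
        rw [hSdef]
        exact ((isHomogeneous_X_pow 0 2).add (isHomogeneous_X_pow 1 2)).add
          (isHomogeneous_X_pow 2 2)
      have := homogeneousComponent_of_mem ((mem_homogeneousSubmodule _ _).mpr hSH)
        (m := k + 2)
      rw [this, if_pos (by omega), h2', add_zero]
    have hSH0 : S * H ≠ 0 := mul_ne_zero hS0 hH0
    have hge : k + 2 ≤ (S * K).totalDegree := by
      by_contra hlt'
      push_neg at hlt'
      exact hSH0 (hcomp2 ▸ homogeneousComponent_eq_zero _ _ hlt')
    have hle : (S * K).totalDegree ≤ max 3 k := by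
      rw [hSK]
      exact (totalDegree_add _ _).trans (max_le_max hLdeg le_rfl)
    rcases le_or_gt 3 k with h | h
    · rw [max_eq_right h] at hle; omega
    · rw [max_eq_left h.le] at hle; omega
  -- Step 2 : low homogeneous components of K vanish
  have hcomp : ∀ n, n ≤ 1 → homogeneousComponent n K = 0 := by
    intro n hn
    have hKeq : K = S * K - L := by rw [hSK]; ring
    have eS : S * K = X 0 ^ 2 * K + X 1 ^ 2 * K + X 2 ^ 2 * K := by rw [hSdef]; ring
    have eL : L = X 0 ^ 2 * (2 * G₁) + X 1 ^ 2 * (2 * G₂) + X 2 ^ 2 * (2 * G₃) := by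
      rw [hLdef]; ring
    calc homogeneousComponent n K = homogeneousComponent n (S * K) -
        homogeneousComponent n L := by rw [← map_sub, ← hKeq]
    _ = 0 := by
        rw [eS, eL, map_add, map_add, map_add, map_add,
          comp_term_zero hn, comp_term_zero hn, comp_term_zero hn,
          comp_term_zero hn, comp_term_zero hn, comp_term_zero hn]
        simp
  -- Step 3 : K = 0, contradiction
  apply hK
  ext d
  rw [coeff_zero]
  by_cases hd : d.degree ≤ 1
  · have hc := congrArg (coeff d) (hcomp d.degree hd)
    rw [coeff_homogeneousComponent, if_pos rfl] at hc
    simpa using hc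
  · apply coeff_eq_zero_of_totalDegree_lt
    have hde : (∑ i ∈ d.support, d i) = d.degree := rfl
    omega
end

section
/- Consider the cubic Kolmogorov system ẋ₁ = x₁(r₁ + Σᵢ aᵢxᵢ + Σ_{1≤i≤j≤3} a_{ij}xᵢxⱼ), ẋ₂ = x₂(r₂ + Σᵢ bᵢxᵢ + Σ_{1≤i≤j≤3} b_{ij}xᵢxⱼ), ẋ₃ = x₃(r₃ + Σᵢ cᵢxᵢ + Σ_{1≤i≤j≤3} c_{ij}xᵢxⱼ) with real coefficients. There exists a polynomial K(x₁,x₂,x₃) such that 2x₁²(r₁ + Σᵢaᵢxᵢ + Σa_{ij}xᵢxⱼ) + 2x₂²(r₂ + Σᵢbᵢxᵢ + Σb_{ij}xᵢxⱼ) + 2x₃²(r₃ + Σᵢcᵢxᵢ + Σc_{ij}xᵢxⱼ) = (x₁²+x₂²+x₃²−1)·K (i.e., the unit sphere S² is invariant) if and only if: aᵢ = bᵢ = cᵢ = 0 for i = 1,2,3; a_{ij} = b_{ij} = c_{ij} = 0 for i ≠ j; a₁₁ = −r₁, a₂₂ = −(r₁+r₂+b₁₁), b₂₂ = −r₂, b₃₃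 = −(r₂+r₃+c₂₂), c₁₁ = −(r₁+r₃+a₃₃), c₃₃ = −r₃. Moreover, in this case the cofactor is K = −2r₁x₁² − 2r₂x₂² − 2r₃x₃². -/
open MvPolynomial

/-- The general quadratic polynomial
`r + a₁x₁ + a₂x₂ + a₃x₃ + a₁₁x₁² + a₁₂x₁x₂ + a₁₃x₁x₃ + a₂₂x₂² + a₂₃x₂x₃ + a₃₃x₃²`. -/
noncomputable def quadG (r a₁ a₂ a₃ a₁₁ a₁₂ a₁₃ a₂₂ a₂₃ a₃₃ : ℝ) :
    MvPolynomial (Fin 3) ℝ :=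
  C r + C a₁ * X 0 + C a₂ * X 1 + C a₃ * X 2
    + C a₁₁ * X 0 ^ 2 + C a₁₂ * X 0 * X 1 + C a₁₃ * X 0 * X 2
    + C a₂₂ * X 1 ^ 2 + C a₂₃ * X 1 * X 2 + C a₃₃ * X 2 ^ 2

/-- `sphereInvariance G₁ G₂ G₃ K` says that the unit sphere `x₁²+x₂²+x₃² = 1` is a Darboux
(invariant) surface of the Kolmogorov system `ẋᵢ = xᵢGᵢ` with cofactor `K`, i.e.
`Σᵢ 2xᵢ²Gᵢ = (x₁²+x₂²+x₃²−1)·K`. -/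
def sphereInvariance (G₁ G₂ G₃ K : MvPolynomial (Fin 3) ℝ) : Prop :=
  2 * X 0 ^ 2 * G₁ + 2 * X 1 ^ 2 * G₂ + 2 * X 2 ^ 2 * G₃
    = (X 0 ^ 2 + X 1 ^ 2 + X 2 ^ 2 - 1) * K

set_option maxHeartbeats 2000000 in
/-- The cubic Kolmogorov system `ẋᵢ = xᵢGᵢ` with general quadratic `Gᵢ`'s admits the unit
sphere as an invariant surface (for some cofactor `K`) iff the coefficients satisfy the
stated conditions; moreover, in that case the cofactor is `K = −2r₁x₁² − 2r₂x₂² − 2r₃x₃²`. -/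
theorem invariant_sphere_iff_coeff_conditions (r₁ r₂ r₃ a₁ a₂ a₃ a₁₁ a₁₂ a₁₃ a₂₂ a₂₃ a₃₃ b₁ b₂ b₃ b₁₁ b₁₂ b₁₃ b₂₂ b₂₃ b₃₃ c₁ c₂ c₃ c₁₁ c₁₂ c₁₃ c₂₂ c₂₃ c₃₃ : ℝ) :
    ((∃ K, sphereInvariance (quadG r₁ a₁ a₂ a₃ a₁₁ a₁₂ a₁₃ a₂₂ a₂₃ a₃₃)
        (quadG r₂ b₁ b₂ b₃ b₁₁ b₁₂ b₁₃ b₂₂ b₂₃ b₃₃)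
        (quadG r₃ c₁ c₂ c₃ c₁₁ c₁₂ c₁₃ c₂₂ c₂₃ c₃₃) K) ↔
      (a₁ = 0 ∧ a₂ = 0 ∧ a₃ = 0 ∧ b₁ = 0 ∧ b₂ = 0 ∧ b₃ = 0 ∧
       c₁ = 0 ∧ c₂ = 0 ∧ c₃ = 0 ∧
       a₁₂ = 0 ∧ a₁₃ = 0 ∧ a₂₃ = 0 ∧ b₁₂ = 0 ∧ b₁₃ = 0 ∧ b₂₃ = 0 ∧
       c₁₂ = 0 ∧ c₁₃ = 0 ∧ c₂₃ = 0 ∧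
       a₁₁ = -r₁ ∧ a₂₂ = -(r₁ + r₂ + b₁₁) ∧ b₂₂ = -r₂ ∧
       b₃₃ = -(r₂ + r₃ + c₂₂) ∧ c₁₁ = -(r₁ + r₃ + a₃₃) ∧ c₃₃ = -r₃))
    ∧ ((a₁ = 0 ∧ a₂ = 0 ∧ a₃ = 0 ∧ b₁ = 0 ∧ b₂ = 0 ∧ b₃ = 0 ∧
       c₁ = 0 ∧ c₂ = 0 ∧ c₃ = 0 ∧
       a₁₂ = 0 ∧ a₁₃ = 0 ∧ a₂₃ = 0 ∧ b₁₂ = 0 ∧ b₁₃ = 0 ∧ b₂₃ = 0 ∧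
       c₁₂ = 0 ∧ c₁₃ = 0 ∧ c₂₃ = 0 ∧
       a₁₁ = -r₁ ∧ a₂₂ = -(r₁ + r₂ + b₁₁) ∧ b₂₂ = -r₂ ∧
       b₃₃ = -(r₂ + r₃ + c₂₂) ∧ c₁₁ = -(r₁ + r₃ + a₃₃) ∧ c₃₃ = -r₃) →
        sphereInvariance (quadG r₁ a₁ a₂ a₃ a₁₁ a₁₂ a₁₃ a₂₂ a₂₃ a₃₃)
        (quadG r₂ b₁ b₂ b₃ b₁₁ b₁₂ b₁₃ b₂₂ b₂₃ b₃₃)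
        (quadG r₃ c₁ c₂ c₃ c₁₁ c₁₂ c₁₃ c₂₂ c₂₃ c₃₃)
          (C (-2 * r₁) * X 0 ^ 2 + C (-2 * r₂) * X 1 ^ 2 + C (-2 * r₃) * X 2 ^ 2)) := by
  have hb : (a₁ = 0 ∧ a₂ = 0 ∧ a₃ = 0 ∧ b₁ = 0 ∧ b₂ = 0 ∧ b₃ = 0 ∧
       c₁ = 0 ∧ c₂ = 0 ∧ c₃ = 0 ∧
       a₁₂ = 0 ∧ a₁₃ = 0 ∧ a₂₃ = 0 ∧ b₁₂ = 0 ∧ b₁₃ = 0 ∧ b₂₃ = 0 ∧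
       c₁₂ = 0 ∧ c₁₃ = 0 ∧ c₂₃ = 0 ∧
       a₁₁ = -r₁ ∧ a₂₂ = -(r₁ + r₂ + b₁₁) ∧ b₂₂ = -r₂ ∧
       b₃₃ = -(r₂ + r₃ + c₂₂) ∧ c₁₁ = -(r₁ + r₃ + a₃₃) ∧ c₃₃ = -r₃) →
      sphereInvariance (quadG r₁ a₁ a₂ a₃ a₁₁ a₁₂ a₁₃ a₂₂ a₂₃ a₃₃)
        (quadG r₂ b₁ b₂ b₃ b₁₁ b₁₂ b₁₃ b₂₂ b₂₃ b₃₃)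
        (quadG r₃ c₁ c₂ c₃ c₁₁ c₁₂ c₁₃ c₂₂ c₂₃ c₃₃)
        (C (-2 * r₁) * X 0 ^ 2 + C (-2 * r₂) * X 1 ^ 2 + C (-2 * r₃) * X 2 ^ 2) := by
    rintro ⟨rfl, rfl, rfl, rfl, rfl, rfl, rfl, rfl, rfl, rfl, rfl, rfl, rfl, rfl, rfl, rfl,
      rfl, rfl, rfl, rfl, rfl, rfl, rfl, rfl⟩
    unfold sphereInvariance quadG
    simp only [map_neg, map_add, map_mul, map_zero, map_ofNat]
    ring
  refine ⟨⟨?_, fun h => ⟨_, hb h⟩⟩, hb⟩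
  rintro ⟨K, hK⟩
  unfold sphereInvariance quadG at hK
  have key : ∀ p q s : ℝ, p ^ 2 + q ^ 2 + s ^ 2 = 1 →
      2*p^2*(r₁+a₁*p+a₂*q+a₃*s+a₁₁*p^2+a₁₂*p*q+a₁₃*p*s+a₂₂*q^2+a₂₃*q*s+a₃₃*s^2)
      + 2*q^2*(r₂+b₁*p+b₂*q+b₃*s+b₁₁*p^2+b₁₂*p*q+b₁₃*p*s+b₂₂*q^2+b₂₃*q*s+b₃₃*s^2)
      + 2*s^2*(r₃+c₁*p+c₂*q+c₃*s+c₁₁*p^2+c₁₂*p*q+c₁₃*p*s+c₂₂*q^2+c₂₃*q*s+c₃₃*s^2) = 0 := by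
    intro p q s hs
    have h2 := congrArg (MvPolynomial.eval ![p,q,s]) hK
    simp only [map_add, map_sub, map_mul, map_pow, map_one, map_ofNat, eval_C, eval_X,
      Matrix.cons_val_zero, Matrix.cons_val_one, Matrix.head_cons, Matrix.cons_val_two,
      Matrix.tail_cons] at h2
    linear_combination h2 + (MvPolynomial.eval ![p,q,s] K) * hs
  clear hK
  have e0 := key (1) (0) (0) (by norm_num)
  have e1 := key (-1) (0) (0) (by norm_num)
  have e2 := key (0) (1) (0) (by norm_num)
  have e3 := key (0) (-1) (0) (by norm_num)
  have e4 := key (0) (0) (1) (by norm_num)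
  have e5 := key (0) (0) (-1) (by norm_num)
  have e6 := key (3/5) (4/5) (0) (by norm_num)
  have e7 := key (3/5) (0) (4/5) (by norm_num)
  have e8 := key (0) (3/5) (4/5) (by norm_num)
  have e9 := key (3/5) (-4/5) (0) (by norm_num)
  have e10 := key (3/5) (0) (-4/5) (by norm_num)
  have e11 := key (0) (3/5) (-4/5) (by norm_num)
  have e12 := key (-3/5) (4/5) (0) (by norm_num)
  have e13 := key (-3/5) (0) (4/5) (by norm_num)
  have e14 := key (0) (-3/5) (4/5) (by norm_num)
  have e15 := key (-3/5) (-4/5) (0) (by norm_num)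
  have e16 := key (-3/5) (0) (-4/5) (by norm_num)
  have e17 := key (0) (-3/5) (-4/5) (by norm_num)
  have e18 := key (4/5) (3/5) (0) (by norm_num)
  have e19 := key (4/5) (0) (3/5) (by norm_num)
  have e20 := key (0) (4/5) (3/5) (by norm_num)
  have e30 := key (1/3) (2/3) (2/3) (by norm_num)
  have e31 := key (2/3) (1/3) (2/3) (by norm_num)
  have e32 := key (2/3) (2/3) (1/3) (by norm_num)
  exact ⟨by linear_combination (1/4)*e0 + (-1/4)*e1, by linear_combination (-4/9)*e2 + (4/9)*e3 + (125/288)*e6 + (-125/288)*e9 + (125/288)*e12 + (-125/288)*e15, by linear_combination (-4/9)*e4 + (4/9)*e5 + (125/288)*e7 + (-125/288)*e10 + (125/288)*e13 + (-125/288)*e16, by linear_combination (-9/64)*e0 + (9/64)*e1 + (125/384)*e6 + (125/384)*e9 + (-125/384)*e12 + (-125/384)*e15, by linear_combination (1/4)*e2 + (-1/4)*e3, by linear_combination (-4/9)*e4 + (4/9)*e5 + (125/288)*e8 + (-125/288)*e11 + (125/288)*e14 + (-125/288)*e17, by linear_combination (-9/64)*e0 + (9/64)*e1 + (125/384)*e7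 + (125/384)*e10 + (-125/384)*e13 + (-125/384)*e16, by linear_combination (-9/64)*e2 + (9/64)*e3 + (125/384)*e8 + (125/384)*e11 + (-125/384)*e14 + (-125/384)*e17, by linear_combination (1/4)*e4 + (-1/4)*e5, by linear_combination (-3/4)*e0 + (1/12)*e1 + (8/9)*e2 + (-2/9)*e3 + (-625/288)*e6 + (25/288)*e9 + (-175/288)*e12 + (625/2016)*e15 + (50/21)*e18, by linear_combination (-3/4)*e0 + (1/12)*e1 + (8/9)*e4 + (-2/9)*e5 + (-625/288)*e7 + (25/288)*e10 + (-175/288)*e13 + (625/2016)*e16 + (50/21)*e19, by linear_combination (61/40)*e0 + (7/80)*e1 + (-203/720)*e2 + (-113/720)*e3 + (-14/45)*e4 + (-17/60)*e5 + (725/576)*e6 + (725/576)*e7 + (425/288)*e8 + (65/576)*e9 + (65/576)*e10 + (5/32)*e11 + (-65/288)*e12 + (-65/288)*e13 + (35/288)*e14 + (25/2016)*e15 + (25/2016)*e16 + (25/96)*e17 + (-235/56)*e18 + (-235/56)*e19 + (35/24)*e20 + (-243/40)*e30 + (81/20)*e31 + (81/20)*e32, by linear_combination (27/64)*e0 + (-3/64)*e1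 + (-1/2)*e2 + (1/8)*e3 + (625/384)*e6 + (-175/384)*e9 + (-25/384)*e12 + (625/2688)*e15 + (-75/56)*e18, by linear_combination (-127/320)*e0 + (-101/960)*e1 + (1087/720)*e2 + (239/1440)*e3 + (-14/45)*e4 + (-17/60)*e5 + (-4925/1152)*e6 + (425/288)*e7 + (725/576)*e8 + (-245/1152)*e9 + (5/32)*e10 + (65/576)*e11 + (115/1152)*e12 + (35/288)*e13 + (-65/288)*e14 + (-275/8064)*e15 + (25/96)*e16 + (25/2016)*e17 + (155/112)*e18 + (35/24)*e19 + (-235/56)*e20 + (81/20)*e30 + (-243/40)*e31 + (81/20)*e32, by linear_combination (-3/4)*e2 + (1/12)*e3 + (8/9)*e4 + (-2/9)*e5 + (-625/288)*e8 + (25/288)*e11 + (-175/288)*e14 + (625/2016)*e17 + (50/21)*e20, by linear_combination (-127/320)*e0 + (-101/960)*e1 + (-409/960)*e2 + (-667/2880)*e3 + (269/180)*e4 + (11/45)*e5 + (425/288)*e6 + (-4925/1152)*e7 + (-4925/1152)*e8 + (5/32)*e9 + (-245/1152)*e10 + (-245/1152)*e11 + (35/288)*e12 + (115/1152)*e13 +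 (115/1152)*e14 + (25/96)*e15 + (-275/8064)*e16 + (-275/8064)*e17 + (35/24)*e18 + (155/112)*e19 + (155/112)*e20 + (81/20)*e30 + (81/20)*e31 + (-243/40)*e32, by linear_combination (27/64)*e0 + (-3/64)*e1 + (-1/2)*e4 + (1/8)*e5 + (625/384)*e7 + (-175/384)*e10 + (-25/384)*e13 + (625/2688)*e16 + (-75/56)*e19, by linear_combination (27/64)*e2 + (-3/64)*e3 + (-1/2)*e4 + (1/8)*e5 + (625/384)*e8 + (-175/384)*e11 + (-25/384)*e14 + (625/2688)*e17 + (-75/56)*e20, by linear_combination (1/4)*e0 + (1/4)*e1, by linear_combination (-9/64)*e0 + (-9/64)*e1 + (-4/9)*e2 + (-4/9)*e3 + (625/1152)*e6 + (625/1152)*e9 + (625/1152)*e12 + (625/1152)*e15, by linear_combination (1/4)*e2 + (1/4)*e3, by linear_combination (-9/64)*e2 + (-9/64)*e3 + (-4/9)*e4 + (-4/9)*e5 + (625/1152)*e8 + (625/1152)*e11 + (625/1152)*e14 + (625/1152)*e17, by linear_combination (-9/64)*e0 + (-9/64)*e1 + (-4/9)*e4 + (-4/9)*e5 + (625/1152)*e7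 + (625/1152)*e10 + (625/1152)*e13 + (625/1152)*e16, by linear_combination (1/4)*e4 + (1/4)*e5⟩
end

section
/- Consider the cubic Kolmogorov system ẋ₁ = x₁(r₁ + Σᵢ aᵢxᵢ + Σ_{1≤i≤j≤3} a_{ij}xᵢxⱼ), ẋ₂ = x₂(r₂ + Σᵢ bᵢxᵢ + Σ_{1≤i≤j≤3} b_{ij}xᵢxⱼ), ẋ₃ = x₃(r₃ + Σᵢ cᵢxᵢ + Σ_{1≤i≤j≤3} c_{ij}xᵢxⱼ) with real coefficients. There exists a NONZERO polynomial K(x₁,x₂,x₃) such that 2x₁²(r₁ + Σᵢaᵢxᵢ + Σa_{ij}xᵢxⱼ) + 2x₂²(r₂ + Σᵢbᵢxᵢ + Σb_{ij}xᵢxⱼ) + 2x₃²(r₃ + Σᵢcᵢxᵢ + Σc_{ij}xᵢxⱼ) = (x₁²+x₂²+x₃²−1)·K (i.e., S² is an isolated invariant sphere) if and only if both r₁² + r₂² + r₃² ≠ 0 and the conditions: aᵢ = bᵢ = cᵢ = 0 for i = 1,2,3; a_{ij} = b_{ij} = c_{ij} = 0 for i ≠ j; a₁₁ = −r₁, a₂₂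 = −(r₁+r₂+b₁₁), b₂₂ = −r₂, b₃₃ = −(r₂+r₃+c₂₂), c₁₁ = −(r₁+r₃+a₃₃), c₃₃ = −r₃ hold. -/
open MvPolynomial

set_option maxHeartbeats 2000000 in
/-- The cubic Kolmogorov system `ẋᵢ = xᵢGᵢ` with general quadratic `Gᵢ`'s admits the unit
sphere as an *isolated* invariant surface (nonzero cofactor `K`) iff `r₁²+r₂²+r₃² ≠ 0` and
the coefficients satisfy the stated conditions. -/
theorem isolated_invariant_sphere_iff (r₁ r₂ r₃ a₁ a₂ a₃ a₁₁ a₁₂ a₁₃ a₂₂ a₂₃ a₃₃ b₁ b₂ b₃ b₁₁ b₁₂ b₁₃ b₂₂ b₂₃ b₃₃ c₁ c₂ c₃ c₁₁ c₁₂ c₁₃ c₂₂ c₂₃ c₃₃ : ℝ) :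
    (∃ K, K ≠ 0 ∧ sphereInvariance (quadG r₁ a₁ a₂ a₃ a₁₁ a₁₂ a₁₃ a₂₂ a₂₃ a₃₃)
        (quadG r₂ b₁ b₂ b₃ b₁₁ b₁₂ b₁₃ b₂₂ b₂₃ b₃₃)
        (quadG r₃ c₁ c₂ c₃ c₁₁ c₁₂ c₁₃ c₂₂ c₂₃ c₃₃) K) ↔
      (r₁ ^ 2 + r₂ ^ 2 + r₃ ^ 2 ≠ 0 ∧
      (a₁ = 0 ∧ a₂ = 0 ∧ a₃ = 0 ∧ b₁ = 0 ∧ b₂ = 0 ∧ b₃ = 0 ∧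
       c₁ = 0 ∧ c₂ = 0 ∧ c₃ = 0 ∧
       a₁₂ = 0 ∧ a₁₃ = 0 ∧ a₂₃ = 0 ∧ b₁₂ = 0 ∧ b₁₃ = 0 ∧ b₂₃ = 0 ∧
       c₁₂ = 0 ∧ c₁₃ = 0 ∧ c₂₃ = 0 ∧
       a₁₁ = -r₁ ∧ a₂₂ = -(r₁ + r₂ + b₁₁) ∧ b₂₂ = -r₂ ∧
       b₃₃ = -(r₂ + r₃ + c₂₂) ∧ c₁₁ = -(r₁ + r₃ + a₃₃) ∧ c₃₃ = -r₃)) := by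

  constructor
  · rintro ⟨K, hK, hinv⟩
    unfold sphereInvariance quadG at hinv
    have E : ∀ u v w : ℝ, u ^ 2 + v ^ 2 + w ^ 2 = 1 →
        u^2*(r₁ + a₁*u + a₂*v + a₃*w + a₁₁*u^2 + a₁₂*u*v + a₁₃*u*w + a₂₂*v^2 + a₂₃*v*w + a₃₃*w^2)
        + v^2*(r₂ + b₁*u + b₂*v + b₃*w + b₁₁*u^2 + b₁₂*u*v + b₁₃*u*w + b₂₂*v^2 + b₂₃*v*w + b₃₃*w^2)
        + w^2*(r₃ + c₁*u + c₂*v + c₃*w + c₁₁*u^2 + c₁₂*u*v + c₁₃*u*w + c₂₂*v^2 + c₂₃*v*w + c₃₃*w^2)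
        = 0 := by
      intro u v w hs
      have h := congrArg (MvPolynomial.eval ![u, v, w]) hinv
      simp only [map_add, map_sub, map_mul, map_pow, map_one, map_ofNat, eval_C, eval_X,
        Matrix.cons_val_zero, Matrix.cons_val_one, Matrix.head_cons, Matrix.cons_val_two,
        Matrix.tail_cons] at h
      linear_combination h / 2 + (MvPolynomial.eval ![u, v, w] K) / 2 * hs
    have h0 := E 1 0 0 (by norm_num)
    have h1 := E 0 1 0 (by norm_num)
    have h2 := E 0 0 1 (by norm_num)
    have h3 := E (-1:ℝ) 0 0 (by norm_num)
    have h4 := E 0 (-1:ℝ) 0 (by norm_num)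
    have h5 := E 0 0 (-1:ℝ) (by norm_num)
    have h6 := E (3/5) (4/5) 0 (by norm_num)
    have h7 := E (3/5) 0 (4/5) (by norm_num)
    have h8 := E 0 (3/5) (4/5) (by norm_num)
    have h9 := E (3/5) (-4/5:ℝ) 0 (by norm_num)
    have h10 := E (3/5) 0 (-4/5:ℝ) (by norm_num)
    have h11 := E 0 (3/5) (-4/5:ℝ) (by norm_num)
    have h12 := E (-3/5:ℝ) (4/5) 0 (by norm_num)
    have h13 := E (-3/5:ℝ) 0 (4/5) (by norm_num)
    have h14 := E 0 (-3/5:ℝ) (4/5) (by norm_num)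
    have h15 := E (-3/5:ℝ) (-4/5:ℝ) 0 (by norm_num)
    have h16 := E (-3/5:ℝ) 0 (-4/5:ℝ) (by norm_num)
    have h17 := E 0 (-3/5:ℝ) (-4/5:ℝ) (by norm_num)
    have h18 := E (4/5) (3/5) 0 (by norm_num)
    have h19 := E (4/5) 0 (3/5) (by norm_num)
    have h20 := E 0 (4/5) (3/5) (by norm_num)
    have h21 := E (1/3) (2/3) (2/3) (by norm_num)
    have h22 := E (1/3) (2/3) (-2/3:ℝ) (by norm_num)
    have h23 := E (1/3) (-2/3:ℝ) (2/3) (by norm_num)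

    have Ha₁ : a₁ = 0 := by linear_combination (1/2) * h0 - (1/2) * h3
    have Ha₂ : a₂ = 0 := by linear_combination -(8/9) * h1 + (8/9) * h4 + (125/144) * h6 - (125/144) * h9 + (125/144) * h12 - (125/144) * h15
    have Ha₃ : a₃ = 0 := by linear_combination -(8/9) * h2 + (8/9) * h5 + (125/144) * h7 - (125/144) * h10 + (125/144) * h13 - (125/144) * h16
    have Hb₁ : b₁ = 0 := by linear_combination -(9/32) * h0 + (9/32) * h3 + (125/192) * h6 + (125/192) * h9 - (125/192) * h12 - (125/192) * h15
    have Hb₂ : b₂ = 0 := by linear_combination (1/2) * h1 - (1/2) * h4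
    have Hb₃ : b₃ = 0 := by linear_combination -(8/9) * h2 + (8/9) * h5 + (125/144) * h8 - (125/144) * h11 + (125/144) * h14 - (125/144) * h17
    have Hc₁ : c₁ = 0 := by linear_combination -(9/32) * h0 + (9/32) * h3 + (125/192) * h7 + (125/192) * h10 - (125/192) * h13 - (125/192) * h16
    have Hc₂ : c₂ = 0 := by linear_combination -(9/32) * h1 + (9/32) * h4 + (125/192) * h8 + (125/192) * h11 - (125/192) * h14 - (125/192) * h17
    have Hc₃ : c₃ = 0 := by linear_combination (1/2) * h2 - (1/2) * h5
    have Ha₁₂ : a₁₂ = 0 := by linear_combination -(3/2) * h0 + (16/9) * h1 + (1/6) * h3 - (4/9) * h4 - (625/144) * h6 + (25/144) * h9 - (175/144) * h12 + (625/1008) * h15 + (100/21) * h18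
    have Ha₁₃ : a₁₃ = 0 := by linear_combination -(3/2) * h0 + (16/9) * h2 + (1/6) * h3 - (4/9) * h5 - (625/144) * h7 + (25/144) * h10 - (175/144) * h13 + (625/1008) * h16 + (100/21) * h19
    have Ha₂₃ : a₂₃ = 0 := by linear_combination -(7/4) * h0 + (47/18) * h1 - (50/9) * h2 + (7/8) * h3 - (11/36) * h4 - (5/3) * h5 + (875/288) * h6 + (875/288) * h7 + (625/72) * h8 + (875/288) * h9 + (875/288) * h10 + (175/24) * h11 - (125/144) * h12 - (125/144) * h13 + (175/18) * h14 - (125/144) * h15 - (125/144) * h16 - (25/3) * h20 - (81/8) * h22 - (81/8) * h23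
    have Hb₁₂ : b₁₂ = 0 := by linear_combination (27/32) * h0 - h1 - (3/32) * h3 + (1/4) * h4 + (625/192) * h6 - (175/192) * h9 - (25/192) * h12 + (625/1344) * h15 - (75/28) * h18
    have Hb₁₃ : b₁₃ = 0 := by linear_combination (13/32) * h0 + (1/144) * h1 + (65/18) * h2 - (37/96) * h3 + (1/144) * h4 - (3/4) * h5 - (875/576) * h6 - (625/144) * h7 - (1375/288) * h8 - (875/576) * h9 + (125/288) * h11 + (125/288) * h12 + (125/576) * h13 - (1375/288) * h14 + (125/288) * h15 + (625/1344) * h16 + (125/288) * h17 + (125/84) * h19 + (81/16) * h21 + (81/16) * h23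
    have Hb₂₃ : b₂₃ = 0 := by linear_combination -(3/2) * h1 + (16/9) * h2 + (1/6) * h4 - (4/9) * h5 - (625/144) * h8 + (25/144) * h11 - (175/144) * h14 + (625/1008) * h17 + (100/21) * h20
    have Hc₁₂ : c₁₂ = 0 := by linear_combination (13/32) * h0 + (55/96) * h1 + (11/9) * h2 - (37/96) * h3 - (41/288) * h4 + (11/9) * h5 - (625/144) * h6 - (875/576) * h7 - (2375/576) * h8 - (875/576) * h10 - (2375/576) * h11 + (125/576) * h12 + (125/288) * h13 - (125/576) * h14 + (625/1344) * h15 + (125/288) * h16 - (125/576) * h17 + (125/84) * h18 + (81/16) * h21 + (81/16) * h22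
    have Hc₁₃ : c₁₃ = 0 := by linear_combination (27/32) * h0 - h2 - (3/32) * h3 + (1/4) * h5 + (625/192) * h7 - (175/192) * h10 - (25/192) * h13 + (625/1344) * h16 - (75/28) * h19
    have Hc₂₃ : c₂₃ = 0 := by linear_combination (27/32) * h1 - h2 - (3/32) * h4 + (1/4) * h5 + (625/192) * h8 - (175/192) * h11 - (25/192) * h14 + (625/1344) * h17 - (75/28) * h20
    have Ha₁₁ : a₁₁ = -r₁ := by linear_combination (1/2) * h0 + (1/2) * h3
    have Ha₂₂ : a₂₂ = -(r₁ + r₂ + b₁₁) := by linear_combination -(9/32) * h0 - (8/9) * h1 - (9/32) * h3 - (8/9) * h4 + (625/576) * h6 + (625/576) * h9 + (625/576) * h12 + (625/576) * h15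
    have Hb₂₂ : b₂₂ = -r₂ := by linear_combination (1/2) * h1 + (1/2) * h4
    have Hb₃₃ : b₃₃ = -(r₂ + r₃ + c₂₂) := by linear_combination -(9/32) * h1 - (8/9) * h2 - (9/32) * h4 - (8/9) * h5 + (625/576) * h8 + (625/576) * h11 + (625/576) * h14 + (625/576) * h17
    have Hc₁₁ : c₁₁ = -(r₁ + r₃ + a₃₃) := by linear_combination -(9/32) * h0 - (8/9) * h2 - (9/32) * h3 - (8/9) * h5 + (625/576) * h7 + (625/576) * h10 + (625/576) * h13 + (625/576) * h16
    have Hc₃₃ : c₃₃ = -r₃ := by linear_combination (1/2) * h2 + (1/2) * h5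
    refine ⟨?_, Ha₁, Ha₂, Ha₃, Hb₁, Hb₂, Hb₃, Hc₁, Hc₂, Hc₃, Ha₁₂, Ha₁₃, Ha₂₃, Hb₁₂, Hb₁₃,
      Hb₂₃, Hc₁₂, Hc₁₃, Hc₂₃, Ha₁₁, Ha₂₂, Hb₂₂, Hb₃₃, Hc₁₁, Hc₃₃⟩
    intro hz0
    have e12 := (add_eq_zero_iff_of_nonneg (by positivity) (sq_nonneg r₃)).mp hz0
    have e1 := (add_eq_zero_iff_of_nonneg (sq_nonneg r₁) (sq_nonneg r₂)).mp e12.1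
    have hr1 : r₁ = 0 := pow_eq_zero_iff (by norm_num) |>.mp e1.1
    have hr2 : r₂ = 0 := pow_eq_zero_iff (by norm_num) |>.mp e1.2
    have hr3 : r₃ = 0 := pow_eq_zero_iff (by norm_num) |>.mp e12.2
    apply hK
    have hfac : (X 0 ^ 2 + X 1 ^ 2 + X 2 ^ 2 - 1 : MvPolynomial (Fin 3) ℝ) ≠ 0 := by
      intro hf
      have h3 := congrArg (MvPolynomial.eval ![(2:ℝ), 0, 0]) hf
      simp only [map_add, map_sub, map_pow, map_one, map_zero, eval_X, Matrix.cons_val_zero,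
        Matrix.cons_val_one, Matrix.head_cons, Matrix.cons_val_two, Matrix.tail_cons] at h3
      norm_num at h3
    have hQ : (X 0 ^ 2 + X 1 ^ 2 + X 2 ^ 2 - 1 : MvPolynomial (Fin 3) ℝ) * K = 0 := by
      rw [← hinv, Ha₁, Ha₂, Ha₃, Hb₁, Hb₂, Hb₃, Hc₁, Hc₂, Hc₃, Ha₁₂, Ha₁₃, Ha₂₃, Hb₁₂, Hb₁₃,
        Hb₂₃, Hc₁₂, Hc₁₃, Hc₂₃, Ha₁₁, Ha₂₂, Hb₂₂, Hb₃₃, Hc₁₁, Hc₃₃, hr1, hr2, hr3]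
      simp only [map_neg, map_add, map_zero, C_0]
      ring
    exact (mul_eq_zero.mp hQ).resolve_left hfac
  · rintro ⟨hr, ha1, ha2, ha3, hb1, hb2, hb3, hc1, hc2, hc3, ha12, ha13, ha23, hb12, hb13,
      hb23, hc12, hc13, hc23, hA11, hA22, hB22, hB33, hC11, hC33⟩
    subst ha1 ha2 ha3 hb1 hb2 hb3 hc1 hc2 hc3 ha12 ha13 ha23 hb12 hb13 hb23 hc12 hc13 hc23
    subst hA11 hA22 hB22 hB33 hC11 hC33
    refine ⟨(C r₁ * X 0 ^ 2 + C r₂ * X 1 ^ 2 + C r₃ * X 2 ^ 2) * (-2), ?_, ?_⟩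
    · intro hz
      apply hr
      have e1 := congrArg (MvPolynomial.eval ![(1:ℝ), 0, 0]) hz
      have e2 := congrArg (MvPolynomial.eval ![(0:ℝ), 1, 0]) hz
      have e3 := congrArg (MvPolynomial.eval ![(0:ℝ), 0, 1]) hz
      simp only [map_add, map_mul, map_pow, map_zero, map_neg, map_ofNat, eval_C, eval_X,
        Matrix.cons_val_zero, Matrix.cons_val_one, Matrix.head_cons, Matrix.cons_val_two,
        Matrix.tail_cons] at e1 e2 e3
      have hr1 : r₁ = 0 := by linarith
      have hr2 : r₂ = 0 := by linarith
      have hr3 : r₃ = 0 := by linarith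
      rw [hr1, hr2, hr3]; ring
    · unfold sphereInvariance quadG
      simp only [map_neg, map_add, C_0, map_zero]
      ring
end

section
/- Assume α₁ ≥ α₂ ≥ α₃ > 0, d₁ ≤ 0, d₃ ≤ 0 and α₁ + α₃ + d₂ ≥ 0. Let B be the 3×3 matrix with rows B₁ = (−α₁, −(α₁+α₂+d₁), d₂), B₂ = (d₁, −α₂, −(α₂+α₃+d₃)), B₃ = (−(α₃+α₁+d₂), d₃, −α₃). Then for all real numbers m₁ ≥ m₂ ≥ m₃ > 0 and all y = (y₁,y₂,y₃) ∈ ℝ³, Σᵢ yᵢ²·(Σⱼ mⱼ·Bᵢⱼ·yⱼ²) ≤ −m₃·(y₁²+y₂²+y₃²)·(α₁y₁² + α₂y₂² + α₃y₃²) ≤ −m₃·α₃·(y₁²+y₂²+y₃²)². -/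
/-- The matrix of cubic interaction coefficients of the Kolmogorov system
`ẏᵢ = yᵢ(αᵢ + Σⱼ Bᵢⱼ yⱼ²)`. -/
def Bmat (α₁ α₂ α₃ d₁ d₂ d₃ : ℝ) : Matrix (Fin 3) (Fin 3) ℝ :=
  !![-α₁, -(α₁ + α₂ + d₁), d₂;
     d₁, -α₂, -(α₂ + α₃ + d₃);
     -(α₃ + α₁ + d₂), d₃, -α₃]

/-- The key algebraic Lyapunov estimate behind the Doss–Sussmann analysis: for weights
`m₁ ≥ m₂ ≥ m₃ > 0`,
`Σᵢ yᵢ²(Σⱼ mⱼBᵢⱼyⱼ²) ≤ −m₃‖y‖²(α₁y₁²+α₂y₂²+α₃y₃²) ≤ −m₃α₃‖y‖⁴`. -/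
theorem weighted_lyapunov_estimate (α₁ α₂ α₃ d₁ d₂ d₃ : ℝ)
    (h12 : α₂ ≤ α₁) (h23 : α₃ ≤ α₂) (h3 : 0 < α₃)
    (hd1 : d₁ ≤ 0) (hd3 : d₃ ≤ 0) (hd2 : 0 ≤ α₁ + α₃ + d₂)
    (m : Fin 3 → ℝ) (hm01 : m 1 ≤ m 0) (hm12 : m 2 ≤ m 1) (hm2 : 0 < m 2)
    (y : Fin 3 → ℝ) :
    (∑ i, y i ^ 2 * ∑ j, m j * Bmat α₁ α₂ α₃ d₁ d₂ d₃ i j * y j ^ 2)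
        ≤ -(m 2) * ((y 0) ^ 2 + (y 1) ^ 2 + (y 2) ^ 2)
            * (α₁ * (y 0) ^ 2 + α₂ * (y 1) ^ 2 + α₃ * (y 2) ^ 2)
    ∧ -(m 2) * ((y 0) ^ 2 + (y 1) ^ 2 + (y 2) ^ 2)
            * (α₁ * (y 0) ^ 2 + α₂ * (y 1) ^ 2 + α₃ * (y 2) ^ 2)
        ≤ -(m 2) * α₃ * ((y 0) ^ 2 + (y 1) ^ 2 + (y 2) ^ 2) ^ 2 := by
  have hu : (0:ℝ) ≤ y 0 ^ 2 := sq_nonneg _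
  have hv : (0:ℝ) ≤ y 1 ^ 2 := sq_nonneg _
  have hw : (0:ℝ) ≤ y 2 ^ 2 := sq_nonneg _
  constructor
  · have hexp : (∑ i, y i ^ 2 * ∑ j, m j * Bmat α₁ α₂ α₃ d₁ d₂ d₃ i j * y j ^ 2)
        = y 0 ^ 2 * (m 0 * (-α₁) * y 0 ^ 2 + m 1 * (-(α₁ + α₂ + d₁)) * y 1 ^ 2 + m 2 * d₂ * y 2 ^ 2)
        + y 1 ^ 2 * (m 0 * d₁ * y 0 ^ 2 + m 1 * (-α₂) * y 1 ^ 2 + m 2 * (-(α₂ + α₃ + d₃)) * y 2 ^ 2)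
        + y 2 ^ 2 * (m 0 * (-(α₃ + α₁ + d₂)) * y 0 ^ 2 + m 1 * d₃ * y 1 ^ 2 + m 2 * (-α₃) * y 2 ^ 2) := by
      simp [Bmat, Fin.sum_univ_three]
    rw [hexp]
    nlinarith [mul_nonneg (mul_nonneg hu hv) (sub_nonneg.2 hm01),
      mul_nonneg (mul_nonneg hv hw) (sub_nonneg.2 hm12),
      mul_nonneg (mul_nonneg hu hu) (sub_nonneg.2 (hm12.trans hm01)),
      mul_nonneg (mul_nonneg hv hv) (sub_nonneg.2 hm12),
      mul_nonneg (mul_nonneg (mul_nonneg hu hw) (sub_nonneg.2 (hm12.trans hm01))) hd2,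
      mul_nonneg (mul_nonneg hu hv) (sub_nonneg.2 hm12),
      mul_nonneg (mul_nonneg (mul_nonneg hu hv) (sub_nonneg.2 hm01)) (neg_nonneg.2 hd1),
      mul_nonneg (mul_nonneg (mul_nonneg hv hw) (sub_nonneg.2 hm12)) (neg_nonneg.2 hd3),
      mul_nonneg (mul_nonneg (mul_nonneg hu hv) (sub_nonneg.2 hm12)) (by linarith : (0:ℝ) ≤ α₁ + α₂),
      mul_nonneg (mul_nonneg hu hw) (sub_nonneg.2 (hm12.trans hm01))]
  · nlinarith [mul_nonneg (mul_nonneg (mul_nonneg hm2.le (by linarith : (0:ℝ) ≤ y 0 ^ 2 + y 1 ^ 2 + y 2 ^ 2)) hu) (by linarith : (0:ℝ) ≤ α₁ - α₃),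
      mul_nonneg (mul_nonneg (mul_nonneg hm2.le (by linarith : (0:ℝ) ≤ y 0 ^ 2 + y 1 ^ 2 + y 2 ^ 2)) hv) (by linarith : (0:ℝ) ≤ α₂ - α₃)]
end

section
/- Assume α₁ ≥ α₂ ≥ α₃ > 0, d₁ ≤ 0, d₃ ≤ 0 and α₁ + α₃ + d₂ ≥ 0. Let B be the 3×3 matrix with rows B₁ = (−α₁, −(α₁+α₂+d₁), d₂), B₂ = (d₁, −α₂, −(α₂+α₃+d₃)), B₃ = (−(α₃+α₁+d₂), d₃, −α₃). Let m₁, m₂, m₃ : [0,∞) → ℝ be continuous with m₁(t) ≥ m₂(t) ≥ m₃(t) > 0 for all t ≥ 0, and let y : [0,∞) → ℝ³ be differentiable with yᵢ'(t) = yᵢ(t)·(Σⱼ mⱼ(t)·Bᵢⱼ·yⱼ(t)²) for i = 1,2,3 and all t ≥ 0. Then t ↦ ‖y(t)‖² is nonincreasing on [0,∞); in particular sup_{t≥0} ‖y(t)‖ ≤ ‖y(0)‖ < ∞. -/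
private lemma key_quad (α₁ α₂ α₃ d₁ d₂ d₃ a b c u v w : ℝ)
    (h12 : α₂ ≤ α₁) (h23 : α₃ ≤ α₂) (h3 : 0 < α₃)
    (hd1 : d₁ ≤ 0) (hd3 : d₃ ≤ 0) (hd2 : 0 ≤ α₁ + α₃ + d₂)
    (hab : b ≤ a) (hbc : c ≤ b) (hc : 0 < c)
    (hu : 0 ≤ u) (hv : 0 ≤ v) (hw : 0 ≤ w) :
    u * (a * -α₁ * u + b * -(α₁ + α₂ + d₁) * v + c * d₂ * w)
    + v * (a * d₁ * u + b * -α₂ * v + c * -(α₂ + α₃ + d₃) * w)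
    + w * (a * -(α₃ + α₁ + d₂) * u + b * d₃ * v + c * -α₃ * w) ≤ 0 := by
  nlinarith [mul_nonneg (mul_nonneg (mul_nonneg (sub_nonneg.2 hab) (neg_nonneg.2 hd1)) hu) hv,
    mul_nonneg (mul_nonneg (mul_nonneg hc.le (by linarith : (0:ℝ) ≤ α₁ + α₂)) hu) hv,
    mul_nonneg (mul_nonneg (mul_nonneg (sub_nonneg.2 hbc) (neg_nonneg.2 hd3)) hv) hw,
    mul_nonneg (mul_nonneg (mul_nonneg hc.le (by linarith : (0:ℝ) ≤ α₂ + α₃)) hv) hw,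
    mul_nonneg (mul_nonneg (mul_nonneg (sub_nonneg.2 (hbc.trans hab)) hd2) hu) hw,
    mul_nonneg (mul_nonneg (mul_nonneg hc.le (by linarith : (0:ℝ) ≤ α₁ + α₃)) hu) hw,
    mul_nonneg (mul_nonneg (mul_nonneg hc.le h3.le) hu) hu,
    mul_nonneg (mul_nonneg (mul_nonneg hc.le h3.le) hv) hv,
    mul_nonneg (mul_nonneg (mul_nonneg hc.le h3.le) hw) hw,
    mul_nonneg (mul_nonneg (mul_nonneg (sub_nonneg.2 hab) (by linarith : (0:ℝ) ≤ α₁)) hu) hu,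
    mul_nonneg (mul_nonneg (mul_nonneg hc.le (by linarith : (0:ℝ) ≤ α₁ - α₃)) hu) hu,
    mul_nonneg (mul_nonneg (mul_nonneg (sub_nonneg.2 hbc) (by linarith : (0:ℝ) ≤ α₂)) hv) hv,
    mul_nonneg (mul_nonneg (mul_nonneg hc.le (by linarith : (0:ℝ) ≤ α₂ - α₃)) hv) hv]

/-- Along solutions of the transformed system `ẏᵢ = yᵢ Σⱼ mⱼ(t)Bᵢⱼyⱼ²` with weights
`m₁(t) ≥ m₂(t) ≥ m₃(t) > 0`, the squared Euclidean norm `‖y(t)‖²` is nonincreasing on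
`[0,∞)`; in particular `sup_t ‖y(t)‖ ≤ ‖y(0)‖ < ∞`. -/
theorem transformed_norm_nonincreasing (α₁ α₂ α₃ d₁ d₂ d₃ : ℝ)
    (h12 : α₂ ≤ α₁) (h23 : α₃ ≤ α₂) (h3 : 0 < α₃)
    (hd1 : d₁ ≤ 0) (hd3 : d₃ ≤ 0) (hd2 : 0 ≤ α₁ + α₃ + d₂)
    (m : Fin 3 → ℝ → ℝ) (hmc : ∀ j, ContinuousOn (m j) (Set.Ici (0 : ℝ)))
    (hm01 : ∀ t : ℝ, 0 ≤ t → m 1 t ≤ m 0 t) (hm12 : ∀ t : ℝ, 0 ≤ t → m 2 t ≤ m 1 t)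
    (hm2 : ∀ t : ℝ, 0 ≤ t → 0 < m 2 t)
    (y : ℝ → EuclideanSpace ℝ (Fin 3))
    (hy : ∀ i, ∀ t : ℝ, 0 ≤ t →
      HasDerivAt (fun s => y s i)
        (y t i * ∑ j, m j t * Bmat α₁ α₂ α₃ d₁ d₂ d₃ i j * (y t j) ^ 2) t) :
    AntitoneOn (fun t => ‖y t‖ ^ 2) (Set.Ici (0 : ℝ)) ∧
      ∀ t : ℝ, 0 ≤ t → ‖y t‖ ≤ ‖y 0‖ := by
  set g : ℝ → ℝ := fun t => ∑ i, (y t i) ^ 2 with hg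
  have hnorm : ∀ t : ℝ, ‖y t‖ ^ 2 = g t := by
    intro t
    rw [EuclideanSpace.norm_eq]
    rw [Real.sq_sqrt (Finset.sum_nonneg fun i _ => sq_nonneg _)]
    simp [hg]
  have hgd : ∀ t : ℝ, 0 ≤ t → HasDerivAt g
      (∑ i, 2 * y t i ^ 1 *
        (y t i * ∑ j, m j t * Bmat α₁ α₂ α₃ d₁ d₂ d₃ i j * (y t j) ^ 2)) t := by
    intro t ht
    exact HasDerivAt.fun_sum fun i _ => (hy i t ht).pow 2
  have hD : ∀ t : ℝ, 0 ≤ t →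
      (∑ i, 2 * y t i ^ 1 *
        (y t i * ∑ j, m j t * Bmat α₁ α₂ α₃ d₁ d₂ d₃ i j * (y t j) ^ 2)) ≤ 0 := by
    intro t ht
    have key := key_quad α₁ α₂ α₃ d₁ d₂ d₃ (m 0 t) (m 1 t) (m 2 t)
      ((y t 0) ^ 2) ((y t 1) ^ 2) ((y t 2) ^ 2)
      h12 h23 h3 hd1 hd3 hd2 (hm01 t ht) (hm12 t ht) (hm2 t ht)
      (sq_nonneg _) (sq_nonneg _) (sq_nonneg _)
    simp only [Bmat, Fin.sum_univ_three, Matrix.cons_val', Matrix.cons_val_zero,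
      Matrix.cons_val_one, Matrix.head_cons, Matrix.empty_val', Matrix.cons_val_fin_one,
      Matrix.cons_val_two, Matrix.tail_cons, Matrix.head_fin_const, Matrix.of_apply,
      Fin.isValue, pow_one]
    nlinarith [key]
  have hanti : AntitoneOn g (Set.Ici (0 : ℝ)) := by
    apply antitoneOn_of_deriv_nonpos (convex_Ici 0)
    · intro t ht
      exact ((hgd t ht).continuousAt).continuousWithinAt
    · intro t ht
      rw [interior_Ici] at ht
      exact (hgd t (le_of_lt ht)).differentiableAt.differentiableWithinAt
    · intro t ht
      rw [interior_Ici] at ht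
      rw [(hgd t (le_of_lt ht)).deriv]
      exact hD t (le_of_lt ht)
  have hanti' : AntitoneOn (fun t => ‖y t‖ ^ 2) (Set.Ici (0 : ℝ)) := by
    have : (fun t => ‖y t‖ ^ 2) = g := funext hnorm
    rw [this]; exact hanti
  refine ⟨hanti', fun t ht => ?_⟩
  have := hanti' (Set.self_mem_Ici) ht ht
  exact (pow_le_pow_iff_left₀ (norm_nonneg _) (norm_nonneg _) two_ne_zero).1 this
end
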